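/- Hardy–Littlewood Abelian-type inequality: for every bounded sequence (R_k)_{k≥0} of real numbers, liminf_{n→∞} (1/n) Σ_{k=0}^{n-1} R_k ≤ liminf_{β→1-} (1-β) Σ_{k=0}^{∞} β^k R_k. -/

import Mathlib

open Filter Finset

/-- Summability of `β^k * f k` when `|f k| ≤ D*(k+1)` and `0 ≤ β < 1`. -/
lemma hl_aux_summable {β : ℝ} (hβ0 : 0 ≤ β) (hβ1 : β < 1) {f : ℕ → ℝ} {D : ℝ}
    (hf : ∀ k, |f k| ≤ D * (k + 1)) : Summable (fun k => β ^ k * f k) := by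
  have hβn : ‖β‖ < 1 := by rwa [Real.norm_eq_abs, abs_of_nonneg hβ0]
  have h1 : Summable (fun k : ℕ => (k : ℝ) * β ^ k) := by
    simpa using summable_pow_mul_geometric_of_norm_lt_one 1 hβn
  have h2 : Summable (fun k : ℕ => β ^ k) := summable_geometric_of_lt_one hβ0 hβ1
  have h3 : Summable (fun k : ℕ => D * (((k : ℝ) + 1) * β ^ k)) := by
    refine Summable.mul_left D ?_
    have := h1.add h2
    refine this.congr fun k => by ring
  refine Summable.of_norm_bounded h3 ?_
  intro k
  have hb := hf k
  have h0 : (0:ℝ) ≤ β ^ k := pow_nonneg hβ0 k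
  rw [Real.norm_eq_abs, abs_mul, abs_of_nonneg h0]
  calc β ^ k * |f k| ≤ β ^ k * (D * ((k : ℝ) + 1)) := mul_le_mul_of_nonneg_left hb h0
    _ = D * (((k : ℝ) + 1) * β ^ k) := by ring

lemma hl_aux_hasSum {β : ℝ} (hβ0 : 0 ≤ β) (hβ1 : β < 1) :
    HasSum (fun k : ℕ => ((k : ℝ) + 1) * β ^ k) (1 / (1 - β) ^ 2) := by
  have hβn : ‖β‖ < 1 := by rwa [Real.norm_eq_abs, abs_of_nonneg hβ0]
  have h1 : HasSum (fun k : ℕ => (k : ℝ) * β ^ k) (β / (1 - β) ^ 2) :=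
    hasSum_coe_mul_geometric_of_norm_lt_one hβn
  have h2 : HasSum (fun k : ℕ => β ^ k) (1 - β)⁻¹ :=
    hasSum_geometric_of_lt_one hβ0 hβ1
  have h := h1.add h2
  have hne : (1:ℝ) - β ≠ 0 := by linarith
  have hval : β / (1 - β) ^ 2 + (1 - β)⁻¹ = 1 / (1 - β) ^ 2 := by
    field_simp
    ring
  rw [hval] at h
  exact h.congr_fun fun k => by ring

/-- Abel summation identity for partial sums. -/
lemma hl_aux_abel {β : ℝ} (hβ0 : 0 ≤ β) (hβ1 : β < 1) (R : ℕ → ℝ) (C : ℝ)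
    (hbdd : ∀ k, |R k| ≤ C) :
    (1 - β) * ∑' k : ℕ, β ^ k * (∑ j ∈ Finset.range (k + 1), R j)
      = ∑' k : ℕ, β ^ k * R k := by
  have hC : 0 ≤ C := (abs_nonneg _).trans (hbdd 0)
  have hSabs : ∀ n : ℕ, |∑ j ∈ Finset.range n, R j| ≤ C * n := by
    intro n
    calc |∑ j ∈ Finset.range n, R j| ≤ ∑ j ∈ Finset.range n, |R j| :=
          Finset.abs_sum_le_sum_abs _ _
      _ ≤ ∑ j ∈ Finset.range n, C := Finset.sum_le_sum fun j _ => hbdd j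
      _ = C * n := by simp [mul_comm]
  have hSabs' : ∀ n : ℕ, |∑ j ∈ Finset.range (n + 1), R j| ≤ C * (n + 1) := by
    intro n
    have := hSabs (n + 1)
    push_cast at this ⊢
    linarith
  have hSabs'' : ∀ n : ℕ, |∑ j ∈ Finset.range n, R j| ≤ C * (n + 1) := by
    intro n
    have := hSabs n
    have hn : (0:ℝ) ≤ (n : ℝ) := Nat.cast_nonneg n
    nlinarith
  have hRabs : ∀ n : ℕ, |R n| ≤ C * (n + 1) := by
    intro n
    have hn : (0:ℝ) ≤ (n : ℝ) := Nat.cast_nonneg n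
    nlinarith [hbdd n]
  have sumS1 : Summable (fun k => β ^ k * (∑ j ∈ Finset.range (k + 1), R j)) :=
    hl_aux_summable hβ0 hβ1 hSabs'
  have sumS : Summable (fun k => β ^ k * (∑ j ∈ Finset.range k, R j)) :=
    hl_aux_summable hβ0 hβ1 hSabs''
  have sumR : Summable (fun k => β ^ k * R k) :=
    hl_aux_summable hβ0 hβ1 hRabs
  have hB : (∑' k : ℕ, β ^ k * (∑ j ∈ Finset.range k, R j))
      = β * ∑' k : ℕ, β ^ k * (∑ j ∈ Finset.range (k + 1), R j) := by
    rw [Summable.tsum_eq_zero_add sumS]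
    simp only [Finset.range_zero, Finset.sum_empty, mul_zero, pow_zero, zero_add]
    rw [← tsum_mul_left]
    exact tsum_congr fun k => by ring
  have hA : (∑' k : ℕ, β ^ k * (∑ j ∈ Finset.range (k + 1), R j))
      = (∑' k : ℕ, β ^ k * (∑ j ∈ Finset.range k, R j)) + ∑' k : ℕ, β ^ k * R k := by
    rw [← Summable.tsum_add sumS sumR]
    exact tsum_congr fun k => by
      rw [Finset.sum_range_succ]; ring
  set A := ∑' k : ℕ, β ^ k * (∑ j ∈ Finset.range (k + 1), R j)
  set B := ∑' k : ℕ, β ^ k * (∑ j ∈ Finset.range k, R j)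
  set D := ∑' k : ℕ, β ^ k * R k
  calc (1 - β) * A = A - β * A := by ring
    _ = (B + D) - B := by rw [← hB, hA]
    _ = D := by ring

/-- Hardy–Littlewood Abelian-type inequality: for every bounded sequence
`(R k)` of real numbers,
`liminf_{n→∞} (1/n) Σ_{k<n} R k ≤ liminf_{β→1⁻} (1-β) Σ_{k} β^k R k`. -/
theorem hardy_littlewood_abelian
    (R : ℕ → ℝ) (C : ℝ) (hbdd : ∀ k, |R k| ≤ C) :
    Filter.liminf (fun n : ℕ => (1 / (n : ℝ)) * ∑ k ∈ Finset.range n, R k) Filter.atTop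
      ≤ Filter.liminf (fun β : ℝ => (1 - β) * ∑' k : ℕ, β ^ k * R k)
          (nhdsWithin 1 (Set.Iio 1)) := by
  have hC : 0 ≤ C := (abs_nonneg _).trans (hbdd 0)
  set a : ℕ → ℝ := fun n => (1 / (n : ℝ)) * ∑ k ∈ Finset.range n, R k with ha
  set g : ℝ → ℝ := fun β => (1 - β) * ∑' k : ℕ, β ^ k * R k with hg
  have hSabs : ∀ n : ℕ, |∑ j ∈ Finset.range n, R j| ≤ C * n := by
    intro n
    calc |∑ j ∈ Finset.range n, R j| ≤ ∑ j ∈ Finset.range n, |R j| :=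
          Finset.abs_sum_le_sum_abs _ _
      _ ≤ ∑ j ∈ Finset.range n, C := Finset.sum_le_sum fun j _ => hbdd j
      _ = C * n := by simp [mul_comm]
  have hSabs' : ∀ n : ℕ, |∑ j ∈ Finset.range (n + 1), R j| ≤ C * (n + 1) := by
    intro n
    have := hSabs (n + 1)
    push_cast at this ⊢
    linarith
  have ha_abs : ∀ n, |a n| ≤ C := by
    intro n
    rcases Nat.eq_zero_or_pos n with h | h
    · simp [ha, h, hC]
    · have hn : (0:ℝ) < n := by exact_mod_cast h
      have habs : |a n| = |∑ j ∈ Finset.range n, R j| / n := by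
        rw [ha]
        rw [abs_mul, abs_of_nonneg (by positivity : (0:ℝ) ≤ 1 / (n:ℝ))]
        ring
      rw [habs, div_le_iff₀ hn]
      exact hSabs n
  -- boundedness facts for `a`
  have hbdd_le : IsBoundedUnder (· ≤ ·) atTop a :=
    ⟨C, Filter.eventually_map.mpr (Filter.Eventually.of_forall
      fun n : ℕ => (le_abs_self _).trans (ha_abs n))⟩
  have hbdd_ge : IsBoundedUnder (· ≥ ·) atTop a :=
    ⟨-C, Filter.eventually_map.mpr (Filter.Eventually.of_forall
      fun n : ℕ => neg_le_of_abs_le (ha_abs n))⟩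
  set L := liminf a atTop with hL
  -- the interval (0,1) is eventual in the left filter at 1
  have hIoo : Set.Ioo (0:ℝ) 1 ∈ nhdsWithin (1:ℝ) (Set.Iio 1) :=
    Ioo_mem_nhdsLT_of_mem (by constructor <;> norm_num)
  -- bound for g on (0,1)
  have hg_bound : ∀ β ∈ Set.Ioo (0:ℝ) 1, |g β| ≤ C := by
    intro β hβ
    obtain ⟨hβ0, hβ1⟩ := hβ
    have h1β : (0:ℝ) < 1 - β := by linarith
    have hnorm : Summable fun k : ℕ => ‖β ^ k * R k‖ := by
      refine Summable.of_nonneg_of_le (fun k => norm_nonneg _) (fun k => ?_)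
        ((summable_geometric_of_lt_one hβ0.le hβ1).mul_left C)
      rw [Real.norm_eq_abs, abs_mul, abs_of_nonneg (pow_nonneg hβ0.le k)]
      calc β ^ k * |R k| ≤ β ^ k * C := mul_le_mul_of_nonneg_left (hbdd k) (pow_nonneg hβ0.le k)
        _ = C * β ^ k := by ring
    have htsum : |∑' k : ℕ, β ^ k * R k| ≤ C * (1 - β)⁻¹ := by
      have h1 := norm_tsum_le_tsum_norm hnorm
      rw [Real.norm_eq_abs] at h1
      refine h1.trans ?_
      have h2 : (∑' k : ℕ, ‖β ^ k * R k‖) ≤ ∑' k : ℕ, C * β ^ k := by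
        refine Summable.tsum_le_tsum (fun k => ?_) hnorm
          ((summable_geometric_of_lt_one hβ0.le hβ1).mul_left C)
        rw [Real.norm_eq_abs, abs_mul, abs_of_nonneg (pow_nonneg hβ0.le k)]
        calc β ^ k * |R k| ≤ β ^ k * C := mul_le_mul_of_nonneg_left (hbdd k) (pow_nonneg hβ0.le k)
          _ = C * β ^ k := by ring
      refine h2.trans ?_
      rw [tsum_mul_left, tsum_geometric_of_lt_one hβ0.le hβ1]
    have : |g β| = (1 - β) * |∑' k : ℕ, β ^ k * R k| := by
      rw [hg, abs_mul, abs_of_nonneg h1β.le]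
    rw [this]
    calc (1 - β) * |∑' k : ℕ, β ^ k * R k| ≤ (1 - β) * (C * (1 - β)⁻¹) :=
          mul_le_mul_of_nonneg_left htsum h1β.le
      _ = C := by field_simp
  have hg_le : IsBoundedUnder (· ≤ ·) (nhdsWithin (1:ℝ) (Set.Iio 1)) g :=
    ⟨C, Filter.eventually_map.mpr (by
      filter_upwards [hIoo] with β hβ
      exact (le_abs_self _).trans (hg_bound β hβ))⟩
  have hg_cobdd : IsCoboundedUnder (· ≥ ·) (nhdsWithin (1:ℝ) (Set.Iio 1)) g :=
    hg_le.isCoboundedUnder_ge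
  -- main estimate
  have key : ∀ ε : ℝ, 0 < ε → L - ε ≤ liminf g (nhdsWithin (1:ℝ) (Set.Iio 1)) := by
    intro ε hε
    refine Filter.le_liminf_of_le hg_cobdd ?_
    set x := L - ε / 2 with hx
    have hxL : x < L := by rw [hx]; linarith
    have hev : ∀ᶠ n in atTop, x < a n :=
      Filter.eventually_lt_of_lt_liminf hxL hbdd_ge
    obtain ⟨N, hN⟩ := Filter.eventually_atTop.mp (hev.and (Filter.eventually_ge_atTop 1))
    have hSx : ∀ n : ℕ, N ≤ n → x * n ≤ ∑ j ∈ Finset.range n, R j := by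
      intro n hn
      obtain ⟨h1, h2⟩ := hN n hn
      have hnpos : (0:ℝ) < n := by exact_mod_cast h2
      have h1' : x < 1 / (n:ℝ) * ∑ j ∈ Finset.range n, R j := h1
      have : x < (∑ j ∈ Finset.range n, R j) / n := by
        rwa [one_div, inv_mul_eq_div] at h1'
      exact ((lt_div_iff₀ hnpos).mp this).le
    set T : ℝ := ∑ k ∈ Finset.range N, ((k : ℝ) + 1) with hT
    have hT0 : 0 ≤ T := Finset.sum_nonneg fun k _ => by positivity
    set M : ℝ := (C + |x|) * T with hM
    have hM0 : 0 ≤ M := mul_nonneg (by positivity) hT0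
    have htend : Tendsto (fun β : ℝ => (1 - β) ^ 2 * M) (nhdsWithin (1:ℝ) (Set.Iio 1)) (nhds 0) := by
      have hcont : Tendsto (fun β : ℝ => (1 - β) ^ 2 * M) (nhds 1) (nhds ((1 - 1) ^ 2 * M)) :=
        (((continuous_const.sub continuous_id).pow 2).mul continuous_const).tendsto 1
      have : ((1:ℝ) - 1) ^ 2 * M = 0 := by ring
      rw [this] at hcont
      exact hcont.mono_left nhdsWithin_le_nhds
    have hsmall : ∀ᶠ β in nhdsWithin (1:ℝ) (Set.Iio 1), (1 - β) ^ 2 * M < ε / 2 :=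
      htend.eventually_lt_const (by linarith)
    filter_upwards [hIoo, hsmall] with β hβ hsm
    obtain ⟨hβ0, hβ1⟩ := hβ
    have h1β : (0:ℝ) < 1 - β := by linarith
    -- Abel identity
    have habel := hl_aux_abel hβ0.le hβ1 R C hbdd
    have hSabs2 : ∀ n : ℕ, |∑ j ∈ Finset.range (n + 1), R j| ≤ C * ((n:ℝ) + 1) := hSabs'
    have sumS1 : Summable (fun k => β ^ k * (∑ j ∈ Finset.range (k + 1), R j)) :=
      hl_aux_summable hβ0.le hβ1 hSabs2
    have sumG : Summable (fun k : ℕ => ((k : ℝ) + 1) * β ^ k) :=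
      (hl_aux_hasSum hβ0.le hβ1).summable
    set F : ℕ → ℝ := fun m => β ^ m * (∑ j ∈ Finset.range (m + 1), R j) with hF
    set f : ℕ → ℝ := fun m => ((m : ℝ) + 1) * β ^ m with hf
    set A := ∑' k : ℕ, F k with hA
    set Q := ∑ k ∈ Finset.range N, F k with hQ
    set P := ∑ k ∈ Finset.range N, f k with hP
    -- split of A
    have hsplitA : Q + (∑' k : ℕ, F (k + N)) = A := Summable.sum_add_tsum_nat_add N sumS1
    -- tail of f
    have hftail : (∑' k : ℕ, f (k + N)) = 1 / (1 - β) ^ 2 - P := by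
      have h1 : P + (∑' k : ℕ, f (k + N)) = ∑' k : ℕ, f k := Summable.sum_add_tsum_nat_add N sumG
      have h2 : (∑' k : ℕ, f k) = 1 / (1 - β) ^ 2 := (hl_aux_hasSum hβ0.le hβ1).tsum_eq
      linarith
    -- termwise tail bound
    have hterm : ∀ k : ℕ, x * f (k + N) ≤ F (k + N) := by
      intro k
      have hSk : x * ((k + N : ℕ) + 1 : ℝ) ≤ ∑ j ∈ Finset.range (k + N + 1), R j := by
        have := hSx (k + N + 1) (by omega)
        push_cast at this ⊢
        linarith
      have hpow : (0:ℝ) ≤ β ^ (k + N) := pow_nonneg hβ0.le _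
      have := mul_le_mul_of_nonneg_left hSk hpow
      calc x * f (k + N) = β ^ (k + N) * (x * ((k + N : ℕ) + 1 : ℝ)) := by
            rw [hf]; push_cast; ring
        _ ≤ β ^ (k + N) * (∑ j ∈ Finset.range (k + N + 1), R j) := this
        _ = F (k + N) := rfl
    have htail_le : x * (1 / (1 - β) ^ 2 - P) ≤ ∑' k : ℕ, F (k + N) := by
      rw [← hftail, ← tsum_mul_left]
      exact Summable.tsum_le_tsum hterm
        (((summable_nat_add_iff N).mpr sumG).mul_left x)
        ((summable_nat_add_iff N).mpr sumS1)
    have hA_ge : Q + x * (1 / (1 - β) ^ 2 - P) ≤ A := by linarith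
    -- bounds for Q and P
    have hQ_abs : |Q| ≤ C * T := by
      rw [hQ, hT, Finset.mul_sum]
      refine (Finset.abs_sum_le_sum_abs _ _).trans (Finset.sum_le_sum fun k _ => ?_)
      have hpk : (0:ℝ) ≤ β ^ k := pow_nonneg hβ0.le _
      have hpk1 : β ^ k ≤ 1 := pow_le_one₀ hβ0.le hβ1.le
      rw [hF, abs_mul, abs_of_nonneg hpk]
      calc β ^ k * |∑ j ∈ Finset.range (k + 1), R j| ≤ 1 * (C * ((k:ℝ) + 1)) :=
            mul_le_mul hpk1 (hSabs2 k) (abs_nonneg _) zero_le_one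
        _ = C * ((k:ℝ) + 1) := by ring
    have hP_bounds : 0 ≤ P ∧ P ≤ T := by
      constructor
      · exact Finset.sum_nonneg fun k _ => mul_nonneg (by positivity) (pow_nonneg hβ0.le _)
      · rw [hP, hT]
        refine Finset.sum_le_sum fun k _ => ?_
        have hpk1 : β ^ k ≤ 1 := pow_le_one₀ hβ0.le hβ1.le
        show ((k:ℝ) + 1) * β ^ k ≤ (k:ℝ) + 1
        nlinarith [pow_nonneg hβ0.le k, Nat.cast_nonneg (α := ℝ) k]
    have hQP : -M ≤ Q - x * P := by
      have h1 : -(C * T) ≤ Q := neg_le_of_abs_le hQ_abs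
      have h2 : x * P ≤ |x| * T := by
        calc x * P ≤ |x * P| := le_abs_self _
          _ = |x| * P := by rw [abs_mul, abs_of_nonneg hP_bounds.1]
          _ ≤ |x| * T := mul_le_mul_of_nonneg_left hP_bounds.2 (abs_nonneg x)
      rw [hM]
      nlinarith
    -- put it together
    have hgval : g β = (1 - β) ^ 2 * A := by
      show (1 - β) * (∑' k : ℕ, β ^ k * R k) = (1 - β) ^ 2 * A
      rw [← habel]
      ring
    have hmul : (1 - β) ^ 2 * (Q + x * (1 / (1 - β) ^ 2 - P)) ≤ (1 - β) ^ 2 * A :=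
      mul_le_mul_of_nonneg_left hA_ge (sq_nonneg _)
    have hexp : (1 - β) ^ 2 * (Q + x * (1 / (1 - β) ^ 2 - P))
        = x + (1 - β) ^ 2 * (Q - x * P) := by
      field_simp
      ring
    have hQPmul : (1 - β) ^ 2 * (-M) ≤ (1 - β) ^ 2 * (Q - x * P) :=
      mul_le_mul_of_nonneg_left hQP (sq_nonneg _)
    have hneg : (1 - β) ^ 2 * (-M) = -((1 - β) ^ 2 * M) := by ring
    clear_value A Q P M x T L
    have hfin : L - ε ≤ (1 - β) ^ 2 * A := by
      calc L - ε = x - ε / 2 := by rw [hx]; ring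
        _ ≤ x + (1 - β) ^ 2 * (Q - x * P) := by linarith only [hQPmul, hneg, hsm]
        _ = (1 - β) ^ 2 * (Q + x * (1 / (1 - β) ^ 2 - P)) := hexp.symm
        _ ≤ (1 - β) ^ 2 * A := hmul
    rw [hgval]
    exact hfin
  -- conclude
  have : ∀ ε : ℝ, 0 < ε → L ≤ liminf g (nhdsWithin (1:ℝ) (Set.Iio 1)) + ε := by
    intro ε hε
    have := key ε hε
    linarith
  exact le_of_forall_pos_le_add this
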